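/- Let G be an entropy-minimal simple graph on vertices v₁,…,v_n with 3 < H(G) < 4 whose subgraph induced on {v₁,…,v₅} is the 5-cycle v₁v₂v₃v₄v₅. Then the subgraph of G induced on {v₆,…,v_n} has at most one edge. -/

import Mathlib

noncomputable section

/-- `g : [q]^V → [q]` depends essentially on coordinate `u`: there exist two inputs that
differ only at coordinate `u` on which `g` takes different values. -/
def DependsEssOn {V : Type*} {q : ℕ} (g : (V → Fin q) → Fin q) (u : V) : Prop :=
  ∃ a b : V → Fin q, (∀ w, w ≠ u → a w = b w) ∧ g a ≠ g b

/-- The interaction graph of `f` is contained in the simple graph `G`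
(viewed as the symmetric loopless digraph with arcs `(u,v)` and `(v,u)` for every edge `uv`). -/
def IGLe {V : Type*} {q : ℕ} (G : SimpleGraph V) (f : (V → Fin q) → (V → Fin q)) : Prop :=
  ∀ u v : V, DependsEssOn (fun x => f x v) u → G.Adj u v

/-- The `q`-ary guessing number of a simple graph `G`: the maximum of `log_q |Fix(f)|`
over all `f` whose interaction graph is contained in `G`. -/
def guessing {V : Type*} (G : SimpleGraph V) (q : ℕ) : ℝ :=
  sSup {x : ℝ | ∃ f : (V → Fin q) → (V → Fin q),
    IGLe G f ∧ x = Real.logb q (Set.ncard {p : V → Fin q | f p = p})}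

/-- The entropy of a simple graph: the supremum over `q ≥ 2` of its `q`-guessing numbers. -/
def graphEntropy {V : Type*} (G : SimpleGraph V) : ℝ :=
  sSup {x : ℝ | ∃ q : ℕ, 2 ≤ q ∧ x = guessing G q}

/-- The set of all entropies of finite simple graphs. -/
def entropySet : Set ℝ := {x : ℝ | ∃ (n : ℕ) (G : SimpleGraph (Fin n)), graphEntropy G = x}

/-- A finite simple graph is entropy-minimal if no simple graph with fewer vertices has the same
fractional part of the entropy. -/
def EntropyMinimal {n : ℕ} (G : SimpleGraph (Fin n)) : Prop :=
  ∀ m : ℕ, m < n → ∀ G' : SimpleGraph (Fin m),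
    Int.fract (graphEntropy G') ≠ Int.fract (graphEntropy G)

open Real

namespace EntAux

/-! ### Basic consequences of (non)dependence -/

lemma not_dependsOn {V : Type*} {q : ℕ} (g : (V → Fin q) → Fin q) {u : V} (h : ¬ DependsEssOn g u)
    {a b : V → Fin q} (hab : ∀ w, w ≠ u → a w = b w) : g a = g b := by
  by_contra hne; exact h ⟨a, b, hab, hne⟩

lemma eval_dependsOn {V : Type*} {q : ℕ} {j u : V}
    (h : DependsEssOn (fun p : V → Fin q => p j) u) : u = j := by
  by_contra hne
  obtain ⟨a, b, hab, hne'⟩ := h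
  exact hne' (hab j (fun hj => hne hj.symm))

lemma add_dependsOn {V : Type*} {q : ℕ} {i j u : V}
    (h : DependsEssOn (fun p : V → Fin q => p i + p j) u) : u = i ∨ u = j := by
  by_contra hne
  push_neg at hne
  obtain ⟨a, b, hab, hne'⟩ := h
  simp only at hne'
  rw [hab i (fun h => hne.1 h.symm), hab j (fun h => hne.2 h.symm)] at hne'
  exact hne' rfl

lemma agree_off {V : Type*} [DecidableEq V] {q : ℕ} (g : (V → Fin q) → Fin q) :
    ∀ S : Finset V, (∀ u ∈ S, ¬ DependsEssOn g u) →
    ∀ a b : V → Fin q, (∀ w, w ∉ S → a w = b w) → g a = g b := by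
  intro S
  induction S using Finset.induction_on with
  | empty =>
    intro _ a b hab
    congr 1
    funext w
    exact hab w (Finset.notMem_empty w)
  | @insert u S hu ih =>
    intro hS a b hab
    have h1 : g a = g (Function.update a u (b u)) := by
      apply not_dependsOn g (hS u (Finset.mem_insert_self u S))
      intro w hw
      rw [Function.update_of_ne hw]
    rw [h1]
    apply ih (fun v hv => hS v (Finset.mem_insert_of_mem hv))
    intro w hw
    by_cases hwu : w = u
    · subst hwu; rw [Function.update_self]
    · rw [Function.update_of_ne hwu]
      exact hab w (by simp [hwu, hw])

lemma ncard_range {α β : Type*} (g : α → β) (hg : Function.Injective g) :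
    (Set.range g).ncard = Nat.card α := by
  rw [← Nat.card_coe_set_eq]
  exact Nat.card_congr (Equiv.ofInjective g hg).symm

/-! ### Basic bounds on guessing numbers and entropy -/

variable {n q : ℕ} (G : SimpleGraph (Fin n))

def gSet (G : SimpleGraph (Fin n)) (q : ℕ) : Set ℝ :=
  {x : ℝ | ∃ f : (Fin n → Fin q) → (Fin n → Fin q),
    IGLe G f ∧ x = Real.logb q (Set.ncard {p : Fin n → Fin q | f p = p})}

lemma guessing_eq (q : ℕ) : guessing G q = sSup (gSet G q) := rfl

lemma gSet_nonempty (hq : 2 ≤ q) : (gSet G q).Nonempty :=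
  ⟨_, (fun _ _ => (⟨0, by omega⟩ : Fin q)), fun u v ⟨a, b, hab, hne⟩ => absurd rfl hne, rfl⟩

lemma gSet_le (hq : 2 ≤ q) : ∀ x ∈ gSet G q, x ≤ (n : ℝ) := by
  rintro x ⟨f, hf, rfl⟩
  have hb : (1 : ℝ) < (q : ℝ) := by exact_mod_cast hq
  have hsub : ({p : Fin n → Fin q | f p = p}).ncard ≤ q ^ n := by
    have h1 := Set.ncard_le_ncard (Set.subset_univ {p : Fin n → Fin q | f p = p})
      Set.finite_univ
    rwa [Set.ncard_univ, Nat.card_fun, Nat.card_eq_fintype_card, Nat.card_eq_fintype_card,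
      Fintype.card_fin, Fintype.card_fin] at h1
  have hqn : Real.logb q ((q : ℝ) ^ n) = (n : ℝ) := by
    rw [Real.logb_pow, Real.logb_self_eq_one (by linarith), mul_one]
  rcases Nat.eq_zero_or_pos (({p : Fin n → Fin q | f p = p}).ncard) with h0 | hpos
  · rw [h0]
    simp [Real.logb_zero]
  · calc Real.logb q (({p : Fin n → Fin q | f p = p}).ncard)
        ≤ Real.logb q ((q : ℝ) ^ n) := by
          apply Real.logb_le_logb_of_le hb (by exact_mod_cast hpos)
          exact_mod_cast hsub
      _ = (n : ℝ) := hqn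

lemma le_guessing (hq : 2 ≤ q) {f : (Fin n → Fin q) → (Fin n → Fin q)} (hf : IGLe G f) :
    Real.logb q (Set.ncard {p : Fin n → Fin q | f p = p}) ≤ guessing G q :=
  le_csSup ⟨(n : ℝ), gSet_le G hq⟩ ⟨f, hf, rfl⟩

lemma guessing_le (hq : 2 ≤ q) : guessing G q ≤ (n : ℝ) :=
  csSup_le (gSet_nonempty G hq) (gSet_le G hq)

lemma guessing_nonneg (hq : 2 ≤ q) : 0 ≤ guessing G q := by
  have h := le_guessing G hq (f := fun _ _ => (⟨0, by omega⟩ : Fin q))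
    (fun u v ⟨a, b, hab, hne⟩ => absurd rfl hne)
  have hset : {p : Fin n → Fin q | (fun _ _ => (⟨0, by omega⟩ : Fin q)) p = p}
      = {(fun _ => (⟨0, by omega⟩ : Fin q))} := by
    ext p
    simp only [Set.mem_setOf_eq, Set.mem_singleton_iff]
    exact eq_comm
  rw [hset, Set.ncard_singleton] at h
  simpa using h

def eSet (G : SimpleGraph (Fin n)) : Set ℝ := {x : ℝ | ∃ q : ℕ, 2 ≤ q ∧ x = guessing G q}

lemma entropy_eq : graphEntropy G = sSup (eSet G) := rfl

lemma eSet_nonempty : (eSet G).Nonempty := ⟨guessing G 2, 2, le_rfl, rfl⟩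

lemma eSet_le : ∀ x ∈ eSet G, x ≤ (n : ℝ) := by
  rintro x ⟨q, hq, rfl⟩; exact guessing_le G hq

lemma le_entropy (hq : 2 ≤ q) : guessing G q ≤ graphEntropy G :=
  le_csSup ⟨(n : ℝ), eSet_le G⟩ ⟨q, hq, rfl⟩

lemma entropy_le {c : ℝ} (h : ∀ q : ℕ, 2 ≤ q → guessing G q ≤ c) : graphEntropy G ≤ c :=
  csSup_le (eSet_nonempty G) (by rintro x ⟨q, hq, rfl⟩; exact h q hq)

/-! ### Lifting small strategies into a large graph -/

lemma guessing_ge_lift {m n q : ℕ} (hq : 2 ≤ q) (hm : 0 < m) (G : SimpleGraph (Fin n))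
    (ι : Fin m → Fin n) (hι : Function.Injective ι)
    (f' : (Fin m → Fin q) → (Fin m → Fin q))
    (hf' : ∀ i j, DependsEssOn (fun p => f' p j) i → G.Adj (ι i) (ι j)) :
    Real.logb q (Set.ncard {p : Fin m → Fin q | f' p = p}) ≤ guessing G q := by
  classical
  haveI : Nonempty (Fin m) := ⟨⟨0, hm⟩⟩
  set r : Fin n → Fin m := Function.invFun ι with hr
  have hrι : ∀ i, r (ι i) = i := fun i => Function.leftInverse_invFun hι i
  set f : (Fin n → Fin q) → (Fin n → Fin q) := fun z w =>
    if w ∈ Set.range ι then f' (z ∘ ι) (r w) else (⟨0, by omega⟩ : Fin q) with hfdef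
  have hIG : IGLe G f := by
    intro u v hdep
    obtain ⟨a, b, hab, hne⟩ := hdep
    by_cases hv : v ∈ Set.range ι
    · obtain ⟨j, rfl⟩ := hv
      have hmem : ι j ∈ Set.range ι := ⟨j, rfl⟩
      simp only [hfdef, if_pos hmem, hrι] at hne
      by_cases hu : u ∈ Set.range ι
      · obtain ⟨i, rfl⟩ := hu
        refine hf' i j ⟨a ∘ ι, b ∘ ι, ?_, hne⟩
        intro w hw
        exact hab (ι w) (fun hcon => hw (hι hcon))
      · exfalso
        have hco : a ∘ ι = b ∘ ι := funext fun i => hab (ι i) (fun hcon => hu ⟨i, hcon⟩)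
        rw [hco] at hne; exact hne rfl
    · exfalso
      simp only [hfdef, if_neg hv] at hne
      exact hne rfl
  set g : {p : Fin m → Fin q | f' p = p} → (Fin n → Fin q) := fun y =>
    (fun w => if hw : w ∈ Set.range ι then (y : Fin m → Fin q) (r w)
      else (⟨0, by omega⟩ : Fin q)) with hgdef
  have hgι : ∀ (y) (i : Fin m), g y (ι i) = (y : Fin m → Fin q) i := by
    intro y i
    simp only [hgdef, dif_pos (Set.mem_range_self i), hrι]
  have hkey : {z : Fin n → Fin q | f z = z} = Set.range g := by
    ext z
    simp only [Set.mem_setOf_eq, Set.mem_range]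
    constructor
    · intro hz
      have hfix : z ∘ ι ∈ {p : Fin m → Fin q | f' p = p} := by
        funext j
        have h1 : f z (ι j) = z (ι j) := congrFun hz (ι j)
        simp only [hfdef, if_pos (Set.mem_range_self j), hrι] at h1
        exact h1
      refine ⟨⟨z ∘ ι, hfix⟩, ?_⟩
      funext w
      by_cases hw : w ∈ Set.range ι
      · obtain ⟨j, rfl⟩ := hw
        simp only [hgdef, dif_pos (Set.mem_range_self j), hrι]
        rfl
      · have h1 : f z w = z w := congrFun hz w
        simp only [hfdef, if_neg hw] at h1
        simp only [hgdef, dif_neg hw]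
        exact h1
    · rintro ⟨y, rfl⟩
      funext w
      by_cases hw : w ∈ Set.range ι
      · obtain ⟨j, rfl⟩ := hw
        have hgy : g y ∘ ι = (y : Fin m → Fin q) := funext fun i => hgι y i
        simp only [hfdef, if_pos (Set.mem_range_self j), hrι, hgy]
        rw [congrFun y.2 j, ← hgι y j]
      · simp only [hfdef, if_neg hw, hgdef, dif_neg hw]
  have hginj : Function.Injective g := by
    intro y₁ y₂ h
    apply Subtype.ext
    funext i
    have := congrFun h (ι i)
    rwa [hgι, hgι] at this
  have hcard : Set.ncard {z : Fin n → Fin q | f z = z}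
      = Set.ncard {p : Fin m → Fin q | f' p = p} := by
    rw [hkey, ncard_range g hginj, Nat.card_coe_set_eq]
  have := le_guessing G hq hIG
  rwa [hcard] at this

/-! ### Concrete small strategies -/

def σM : Fin 8 → Fin 8 := ![1, 0, 3, 2, 5, 4, 7, 6]
def fM : (Fin 8 → Fin 2) → (Fin 8 → Fin 2) := fun p k => p (σM k)

def fT : (Fin 7 → Fin 2) → (Fin 7 → Fin 2) := fun p k =>
  if k = 0 then p 1 + p 2 else if k = 1 then p 0 + p 2 else if k = 2 then p 0 + p 1
  else if k = 3 then p 4 else if k = 4 then p 3 else if k = 5 then p 6 else p 5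

def fE (q : ℕ) : (Fin 2 → Fin q) → (Fin 2 → Fin q) := fun p k => p (1 - k)

lemma ncard_fM : Set.ncard {p : Fin 8 → Fin 2 | fM p = p} = 16 := by
  rw [Set.ncard_eq_toFinset_card', Set.toFinset_setOf]
  decide

lemma ncard_fT : Set.ncard {p : Fin 7 → Fin 2 | fT p = p} = 16 := by
  rw [Set.ncard_eq_toFinset_card', Set.toFinset_setOf]
  decide

lemma ncard_fE (q : ℕ) : Set.ncard {p : Fin 2 → Fin q | fE q p = p} = q := by
  have hkey : {p : Fin 2 → Fin q | fE q p = p} = Set.range (fun β : Fin q => (fun _ => β)) := by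
    ext p
    simp only [Set.mem_setOf_eq, Set.mem_range]
    constructor
    · intro hp
      refine ⟨p 0, ?_⟩
      funext k
      fin_cases k
      · rfl
      · exact congrFun hp 1
    · rintro ⟨β, rfl⟩
      funext k
      rfl
  rw [hkey]
  rw [show (Set.range (fun β : Fin q => (fun _ : Fin 2 => β))).ncard
    = Nat.card (Fin q) from ?_, Nat.card_eq_fintype_card, Fintype.card_fin]
  · rw [← Nat.card_coe_set_eq]
    refine Nat.card_congr (Equiv.ofInjective _ ?_).symm
    intro a b h
    exact congrFun h 0

lemma depM : ∀ i j, DependsEssOn (fun p => fM p j) i → i = σM j := by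
  intro i j hd
  simp only [fM] at hd
  exact eval_dependsOn hd

lemma depT : ∀ i j : Fin 7, DependsEssOn (fun p => fT p j) i →
    (j = 0 ∧ (i = 1 ∨ i = 2)) ∨ (j = 1 ∧ (i = 0 ∨ i = 2)) ∨ (j = 2 ∧ (i = 0 ∨ i = 1)) ∨
    (j = 3 ∧ i = 4) ∨ (j = 4 ∧ i = 3) ∨ (j = 5 ∧ i = 6) ∨ (j = 6 ∧ i = 5) := by
  intro i j hd
  fin_cases j
  · exact Or.inl ⟨rfl, add_dependsOn (by simpa [fT] using hd)⟩
  · exact Or.inr (Or.inl ⟨rfl, add_dependsOn (by simpa [fT] using hd)⟩)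
  · exact Or.inr (Or.inr (Or.inl ⟨rfl, add_dependsOn (by simpa [fT] using hd)⟩))
  · exact Or.inr (Or.inr (Or.inr (Or.inl ⟨rfl, eval_dependsOn (by simpa [fT] using hd)⟩)))
  · exact Or.inr (Or.inr (Or.inr (Or.inr (Or.inl ⟨rfl, eval_dependsOn (by simpa [fT] using hd)⟩))))
  · exact Or.inr (Or.inr (Or.inr (Or.inr (Or.inr (Or.inl ⟨rfl, eval_dependsOn (by simpa [fT] using hd)⟩)))))
  · exact Or.inr (Or.inr (Or.inr (Or.inr (Or.inr (Or.inr ⟨rfl, eval_dependsOn (by simpa [fT] using hd)⟩)))))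

lemma logb_two_sixteen : Real.logb ((2:ℕ):ℝ) ((16:ℕ):ℝ) = 4 := by
  have h1 : ((16:ℕ):ℝ) = ((2:ℕ):ℝ) ^ (4:ℕ) := by norm_num
  rw [h1, Real.logb_pow, Real.logb_self_eq_one (by norm_num), mul_one]
  norm_num

lemma four_le_entropy_matching {N : ℕ} (G : SimpleGraph (Fin N))
    (x₁ x₂ x₃ x₄ x₅ x₆ x₇ x₈ : Fin N)
    (v12 : x₁.val ≠ x₂.val) (v13 : x₁.val ≠ x₃.val) (v14 : x₁.val ≠ x₄.val)
    (v15 : x₁.val ≠ x₅.val) (v16 : x₁.val ≠ x₆.val) (v17 : x₁.val ≠ x₇.val)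
    (v18 : x₁.val ≠ x₈.val) (v23 : x₂.val ≠ x₃.val) (v24 : x₂.val ≠ x₄.val)
    (v25 : x₂.val ≠ x₅.val) (v26 : x₂.val ≠ x₆.val) (v27 : x₂.val ≠ x₇.val)
    (v28 : x₂.val ≠ x₈.val) (v34 : x₃.val ≠ x₄.val) (v35 : x₃.val ≠ x₅.val)
    (v36 : x₃.val ≠ x₆.val) (v37 : x₃.val ≠ x₇.val) (v38 : x₃.val ≠ x₈.val)
    (v45 : x₄.val ≠ x₅.val) (v46 : x₄.val ≠ x₆.val) (v47 : x₄.val ≠ x₇.val)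
    (v48 : x₄.val ≠ x₈.val) (v56 : x₅.val ≠ x₆.val) (v57 : x₅.val ≠ x₇.val)
    (v58 : x₅.val ≠ x₈.val) (v67 : x₆.val ≠ x₇.val) (v68 : x₆.val ≠ x₈.val)
    (v78 : x₇.val ≠ x₈.val)
    (a12 : G.Adj x₁ x₂) (a34 : G.Adj x₃ x₄) (a56 : G.Adj x₅ x₆) (a78 : G.Adj x₇ x₈) :
    (4 : ℝ) ≤ graphEntropy G := by
  set W : Fin 8 → Fin N := fun i =>
    if i = 0 then x₁ else if i = 1 then x₂ else if i = 2 then x₃ else if i = 3 then x₄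
    else if i = 4 then x₅ else if i = 5 then x₆ else if i = 6 then x₇ else x₈ with hWdef
  have e1 : W ⟨0, by omega⟩ = x₁ := rfl
  have e2 : W ⟨1, by omega⟩ = x₂ := rfl
  have e3 : W ⟨2, by omega⟩ = x₃ := rfl
  have e4 : W ⟨3, by omega⟩ = x₄ := rfl
  have e5 : W ⟨4, by omega⟩ = x₅ := rfl
  have e6 : W ⟨5, by omega⟩ = x₆ := rfl
  have e7 : W ⟨6, by omega⟩ = x₇ := rfl
  have e8 : W ⟨7, by omega⟩ = x₈ := rfl
  have hW : Function.Injective W := by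
    intro i j h
    fin_cases i <;> fin_cases j <;>
      first
        | rfl
        | (simp only [e1, e2, e3, e4, e5, e6, e7, e8] at h
           first
             | exact absurd (congrArg Fin.val h) (by assumption)
             | exact absurd (congrArg Fin.val h).symm (by assumption))
  have h01 : G.Adj (W 0) (W 1) := by show G.Adj x₁ x₂; exact a12
  have h23 : G.Adj (W 2) (W 3) := by show G.Adj x₃ x₄; exact a34
  have h45 : G.Adj (W 4) (W 5) := by show G.Adj x₅ x₆; exact a56
  have h67 : G.Adj (W 6) (W 7) := by show G.Adj x₇ x₈; exact a78
  have hdep : ∀ i j, DependsEssOn (fun p => fM p j) i → G.Adj (W i) (W j) := by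
    intro i j hd
    have hi := depM i j hd
    subst hi
    fin_cases j <;>
      first
        | exact h01 | exact h01.symm | exact h23 | exact h23.symm
        | exact h45 | exact h45.symm | exact h67 | exact h67.symm
  have hle := guessing_ge_lift (le_refl 2) (by norm_num) G W hW fM hdep
  rw [ncard_fM] at hle
  have h2 := le_entropy G (le_refl 2)
  have hlog : Real.logb ((2:ℕ):ℝ) ((16:ℕ):ℝ) = 4 := logb_two_sixteen
  push_cast at hle hlog ⊢
  linarith

lemma four_le_entropy_triangle {N : ℕ} (G : SimpleGraph (Fin N))
    (x₁ x₂ x₃ x₄ x₅ x₆ x₇ : Fin N)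
    (v12 : x₁.val ≠ x₂.val) (v13 : x₁.val ≠ x₃.val) (v14 : x₁.val ≠ x₄.val)
    (v15 : x₁.val ≠ x₅.val) (v16 : x₁.val ≠ x₆.val) (v17 : x₁.val ≠ x₇.val)
    (v23 : x₂.val ≠ x₃.val) (v24 : x₂.val ≠ x₄.val) (v25 : x₂.val ≠ x₅.val)
    (v26 : x₂.val ≠ x₆.val) (v27 : x₂.val ≠ x₇.val) (v34 : x₃.val ≠ x₄.val)
    (v35 : x₃.val ≠ x₅.val) (v36 : x₃.val ≠ x₆.val) (v37 : x₃.val ≠ x₇.val)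
    (v45 : x₄.val ≠ x₅.val) (v46 : x₄.val ≠ x₆.val) (v47 : x₄.val ≠ x₇.val)
    (v56 : x₅.val ≠ x₆.val) (v57 : x₅.val ≠ x₇.val) (v67 : x₆.val ≠ x₇.val)
    (a12 : G.Adj x₁ x₂) (a13 : G.Adj x₁ x₃) (a23 : G.Adj x₂ x₃)
    (a45 : G.Adj x₄ x₅) (a67 : G.Adj x₆ x₇) :
    (4 : ℝ) ≤ graphEntropy G := by
  set W : Fin 7 → Fin N := fun i =>
    if i = 0 then x₁ else if i = 1 then x₂ else if i = 2 then x₃ else if i = 3 then x₄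
    else if i = 4 then x₅ else if i = 5 then x₆ else x₇ with hWdef
  have e1 : W ⟨0, by omega⟩ = x₁ := rfl
  have e2 : W ⟨1, by omega⟩ = x₂ := rfl
  have e3 : W ⟨2, by omega⟩ = x₃ := rfl
  have e4 : W ⟨3, by omega⟩ = x₄ := rfl
  have e5 : W ⟨4, by omega⟩ = x₅ := rfl
  have e6 : W ⟨5, by omega⟩ = x₆ := rfl
  have e7 : W ⟨6, by omega⟩ = x₇ := rfl
  have hW : Function.Injective W := by
    intro i j h
    fin_cases i <;> fin_cases j <;>
      first
        | rfl
        | (simp only [e1, e2, e3, e4, e5, e6, e7] at h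
           first
             | exact absurd (congrArg Fin.val h) (by assumption)
             | exact absurd (congrArg Fin.val h).symm (by assumption))
  have h01 : G.Adj (W 0) (W 1) := by show G.Adj x₁ x₂; exact a12
  have h02 : G.Adj (W 0) (W 2) := by show G.Adj x₁ x₃; exact a13
  have h12 : G.Adj (W 1) (W 2) := by show G.Adj x₂ x₃; exact a23
  have h34 : G.Adj (W 3) (W 4) := by show G.Adj x₄ x₅; exact a45
  have h56 : G.Adj (W 5) (W 6) := by show G.Adj x₆ x₇; exact a67
  have hdep : ∀ i j, DependsEssOn (fun p => fT p j) i → G.Adj (W i) (W j) := by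
    intro i j hd
    rcases depT i j hd with ⟨rfl, rfl | rfl⟩ | ⟨rfl, rfl | rfl⟩ | ⟨rfl, rfl | rfl⟩ |
      ⟨rfl, rfl⟩ | ⟨rfl, rfl⟩ | ⟨rfl, rfl⟩ | ⟨rfl, rfl⟩
    · exact h01.symm
    · exact h02.symm
    · exact h01
    · exact h12.symm
    · exact h02
    · exact h12
    · exact h34.symm
    · exact h34
    · exact h56.symm
    · exact h56
  have hle := guessing_ge_lift (le_refl 2) (by norm_num) G W hW fT hdep
  rw [ncard_fT] at hle
  have h2 := le_entropy G (le_refl 2)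
  have hlog : Real.logb ((2:ℕ):ℝ) ((16:ℕ):ℝ) = 4 := logb_two_sixteen
  push_cast at hle hlog ⊢
  linarith

lemma one_le_guessing {n q : ℕ} (hq : 2 ≤ q) (G : SimpleGraph (Fin n)) {u v : Fin n}
    (huv : G.Adj u v) : 1 ≤ guessing G q := by
  set W : Fin 2 → Fin n := fun k => if k = 0 then u else v with hWdef
  have hW : Function.Injective W := by
    intro i j h
    fin_cases i <;> fin_cases j <;> simp_all [hWdef]
  have hdep : ∀ i j, DependsEssOn (fun p => fE q p j) i → G.Adj (W i) (W j) := by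
    intro i j hd
    simp only [fE] at hd
    have hi := eval_dependsOn hd
    subst hi
    fin_cases j
    · simpa [hWdef] using huv.symm
    · simpa [hWdef] using huv
  have hle := guessing_ge_lift hq (by norm_num) G W hW (fE q) hdep
  rw [ncard_fE] at hle
  have hb : (1:ℝ) < (q:ℝ) := by exact_mod_cast hq
  rwa [Real.logb_self_eq_one hb] at hle


lemma pendant_false {k : ℕ} (hk : 3 ≤ k) (G : SimpleGraph (Fin (k+2)))
    (hmin : EntropyMinimal G) (u₀ v₀ : Fin (k+2)) (hadj : G.Adj u₀ v₀)
    (hdeg : ∀ w, G.Adj v₀ w → w = u₀) : False := by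
  classical
  haveI : Nonempty (Fin k) := ⟨⟨0, by omega⟩⟩
  have hne : u₀ ≠ v₀ := hadj.ne
  obtain ⟨u₁, hu₁⟩ := Fin.exists_succAbove_eq hne
  set ι : Fin k → Fin (k+2) := fun j => v₀.succAbove (u₁.succAbove j) with hιdef
  have hι : Function.Injective ι :=
    Fin.succAbove_right_injective.comp Fin.succAbove_right_injective
  have hιv : ∀ j, ι j ≠ v₀ := fun j => Fin.succAbove_ne v₀ _
  have hιu : ∀ j, ι j ≠ u₀ := by
    intro j hj
    rw [← hu₁] at hj
    exact Fin.succAbove_ne u₁ j (Fin.succAbove_right_injective hj)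
  have hsurj : ∀ w : Fin (k+2), w ≠ u₀ → w ≠ v₀ → ∃ j, ι j = w := by
    intro w hwu hwv
    obtain ⟨y, hy⟩ := Fin.exists_succAbove_eq hwv
    have hyu : y ≠ u₁ := by
      intro h
      exact hwu (by rw [← hy, h, hu₁])
    obtain ⟨j, hj⟩ := Fin.exists_succAbove_eq hyu
    exact ⟨j, by rw [hιdef]; simp only; rw [hj, hy]⟩
  set r : Fin (k+2) → Fin k := Function.invFun ι with hrdef
  have hrι : ∀ j, r (ι j) = j := fun j => Function.leftInverse_invFun hι j
  have hιr : ∀ w : Fin (k+2), w ≠ u₀ → w ≠ v₀ → ι (r w) = w := by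
    intro w h1 h2
    obtain ⟨j, hj⟩ := hsurj w h1 h2
    rw [← hj, hrι]
  set G' : SimpleGraph (Fin k) := SimpleGraph.comap ι G with hG'def
  have claim : ∀ q : ℕ, 2 ≤ q → guessing G q = guessing G' q + 1 := by
    intro q hq
    haveI : Nonempty (Fin q) := ⟨⟨0, by omega⟩⟩
    have hupper : guessing G q ≤ guessing G' q + 1 := by
      rw [guessing_eq G q]
      apply csSup_le (gSet_nonempty G hq)
      rintro x ⟨f, hf, rfl⟩
      have hfac : ∀ a b : Fin (k+2) → Fin q, a u₀ = b u₀ → f a v₀ = f b v₀ := by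
        intro a b hab
        apply agree_off (fun p => f p v₀) (Finset.univ.erase u₀)
        · intro u hu hdep
          have hadj2 : G.Adj u v₀ := hf u v₀ hdep
          exact (Finset.ne_of_mem_erase hu) (hdeg u hadj2.symm)
        · intro w hw
          have hw0 : w = u₀ := by simpa using hw
          subst hw0; exact hab
      set F : Finset (Fin (k+2) → Fin q) := Finset.univ.filter (fun p => f p = p) with hF
      have hncard : Set.ncard {p : Fin (k+2) → Fin q | f p = p} = F.card := by
        rw [Set.ncard_eq_toFinset_card', Set.toFinset_setOf]
      obtain ⟨α, -, hαmax⟩ := Finset.exists_max_image Finset.univ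
        (fun β : Fin q => (F.filter (fun p => p u₀ = β)).card) ⟨⟨0, by omega⟩, Finset.mem_univ _⟩
      have hsum : F.card = ∑ β : Fin q, (F.filter (fun p => p u₀ = β)).card :=
        Finset.card_eq_sum_card_fiberwise (fun p _ => Finset.mem_univ (p u₀))
      have hpig : F.card ≤ q * (F.filter (fun p => p u₀ = α)).card := by
        rw [hsum]
        calc ∑ β : Fin q, (F.filter (fun p => p u₀ = β)).card
            ≤ (Finset.univ : Finset (Fin q)).card • (F.filter (fun p => p u₀ = α)).card :=
              Finset.sum_le_card_nsmul _ _ _ (fun β _ => hαmax β (Finset.mem_univ β))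
          _ = q * (F.filter (fun p => p u₀ = α)).card := by
              rw [Finset.card_univ, Fintype.card_fin, smul_eq_mul]
      set hα : Fin q := f (fun _ => α) v₀ with hhα
      set E : (Fin k → Fin q) → (Fin (k+2) → Fin q) := fun y z =>
        if z = u₀ then α else if z = v₀ then hα else y (r z) with hEdef
      set f' : (Fin k → Fin q) → (Fin k → Fin q) := fun y j => f (E y) (ι j) with hf'def
      have hIG' : IGLe G' f' := by
        intro i j hdep
        obtain ⟨a, b, hab, hne'⟩ := hdep
        simp only [hf'def] at hne'
        have hEab : ∀ z, z ≠ ι i → E a z = E b z := by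
          intro z hz
          simp only [hEdef]
          by_cases h1 : z = u₀
          · simp [h1]
          · by_cases h2 : z = v₀
            · simp [h1, h2]
            · simp only [if_neg h1, if_neg h2]
              obtain ⟨j', hj'⟩ := hsurj z h1 h2
              rw [← hj', hrι]
              exact hab j' (fun hcon => hz (by rw [← hj', hcon]))
        exact hf (ι i) (ι j) ⟨E a, E b, hEab, hne'⟩
      have hEfix : ∀ p, f p = p → p u₀ = α → E (p ∘ ι) = p := by
        intro p hp hpu
        funext z
        simp only [hEdef]
        by_cases h1 : z = u₀
        · subst h1; rw [if_pos rfl, hpu]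
        · by_cases h2 : z = v₀
          · rw [if_neg h1, if_pos h2, h2]
            have hfv : f p v₀ = f (fun _ => α) v₀ := hfac p (fun _ => α) (by rw [hpu])
            rw [hhα, ← hfv, congrFun hp v₀]
          · rw [if_neg h1, if_neg h2]
            have := hιr z h1 h2
            simp only [Function.comp_apply, this]
      have hmapsub : (fun p : Fin (k+2) → Fin q => p ∘ ι) '' ↑(F.filter (fun p => p u₀ = α))
          ⊆ {y : Fin k → Fin q | f' y = y} := by
        rintro y ⟨p, hp, rfl⟩
        have hp' := Finset.mem_coe.mp hp
        rw [Finset.mem_filter] at hp'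
        obtain ⟨hp1, hp2⟩ := hp'
        rw [hF, Finset.mem_filter] at hp1
        have hpfix : f p = p := hp1.2
        show f' (p ∘ ι) = p ∘ ι
        funext j
        simp only [hf'def]
        rw [hEfix p hpfix hp2]
        exact congrFun hpfix (ι j)
      have hinjOn : Set.InjOn (fun p : Fin (k+2) → Fin q => p ∘ ι)
          ↑(F.filter (fun p => p u₀ = α)) := by
        intro p1 h1 p2 h2 hco
        rw [Finset.mem_coe, Finset.mem_filter] at h1 h2
        have hfix1 : f p1 = p1 := by
          have := h1.1; rw [hF, Finset.mem_filter] at this; exact this.2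
        have hfix2 : f p2 = p2 := by
          have := h2.1; rw [hF, Finset.mem_filter] at this; exact this.2
        have hv1 : p1 v₀ = hα := by
          rw [← congrFun hfix1 v₀, hhα]
          exact hfac p1 (fun _ => α) (by rw [h1.2])
        have hv2 : p2 v₀ = hα := by
          rw [← congrFun hfix2 v₀, hhα]
          exact hfac p2 (fun _ => α) (by rw [h2.2])
        funext z
        by_cases hz1 : z = u₀
        · subst hz1; rw [h1.2, h2.2]
        · by_cases hz2 : z = v₀
          · subst hz2; rw [hv1, hv2]
          · have := hιr z hz1 hz2
            rw [← this]
            exact congrFun hco (r z)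
      have hcard1 : (F.filter (fun p => p u₀ = α)).card
          ≤ Set.ncard {y : Fin k → Fin q | f' y = y} := by
        rw [← Set.ncard_coe_finset]
        rw [← Set.ncard_image_of_injOn hinjOn]
        exact Set.ncard_le_ncard hmapsub (Set.toFinite _)
      rw [hncard]
      have hG'le := le_guessing G' hq hIG'
      rcases Nat.eq_zero_or_pos F.card with h0 | hpos
      · rw [h0]
        have := guessing_nonneg G' hq
        simp only [Nat.cast_zero, Real.logb_zero]
        linarith
      · have hfibpos : 0 < (F.filter (fun p => p u₀ = α)).card := by
          rcases Nat.eq_zero_or_pos (F.filter (fun p => p u₀ = α)).card with h0 | h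
          · exfalso
            rw [h0] at hpig
            simp only [Nat.mul_zero] at hpig
            exact absurd (lt_of_lt_of_le hpos hpig) (lt_irrefl 0)
          · exact h
        have hMpos : 0 < Set.ncard {y : Fin k → Fin q | f' y = y} := lt_of_lt_of_le hfibpos hcard1
        have hb : (1:ℝ) < (q:ℝ) := by exact_mod_cast hq
        have hstep : Real.logb q (F.card : ℝ)
            ≤ Real.logb q ((q : ℝ) * (Set.ncard {y : Fin k → Fin q | f' y = y} : ℝ)) := by
          apply Real.logb_le_logb_of_le hb (by exact_mod_cast hpos)
          have : (F.card : ℝ) ≤ (q : ℝ) * ((F.filter (fun p => p u₀ = α)).card : ℝ) := by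
            exact_mod_cast hpig
          have h2 : ((F.filter (fun p => p u₀ = α)).card : ℝ)
              ≤ (Set.ncard {y : Fin k → Fin q | f' y = y} : ℝ) := by exact_mod_cast hcard1
          nlinarith
        have hmul : Real.logb q ((q : ℝ) * (Set.ncard {y : Fin k → Fin q | f' y = y} : ℝ))
            = 1 + Real.logb q (Set.ncard {y : Fin k → Fin q | f' y = y}) := by
          rw [Real.logb_mul (by positivity) (by exact_mod_cast hMpos.ne'),
            Real.logb_self_eq_one hb]
        linarith
    have hlower : guessing G' q + 1 ≤ guessing G q := by
      have hstep : sSup (gSet G' q) ≤ guessing G q - 1 := by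
        apply csSup_le (gSet_nonempty G' hq)
        rintro x ⟨f', hf', rfl⟩
        set f : (Fin (k+2) → Fin q) → (Fin (k+2) → Fin q) := fun z w =>
          if w = u₀ then z v₀ else if w = v₀ then z u₀ else f' (z ∘ ι) (r w) with hfdef
        have hIG : IGLe G f := by
          intro u w hdep
          obtain ⟨a, b, hab, hne'⟩ := hdep
          simp only [hfdef] at hne'
          by_cases hw1 : w = u₀
          · subst hw1
            simp only [if_pos rfl] at hne'
            have : u = v₀ := by
              by_contra hcon
              exact hne' (hab v₀ (fun h => hcon h.symm))
            subst this
            exact hadj.symm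
          · by_cases hw2 : w = v₀
            · subst hw2
              simp only [if_neg hw1, if_neg (Ne.symm hne), if_pos rfl] at hne'
              have : u = u₀ := by
                by_contra hcon
                exact hne' (hab u₀ (fun h => hcon h.symm))
              subst this
              exact hadj
            · simp only [if_neg hw1, if_neg hw2] at hne'
              by_cases hu1 : u = u₀
              · exfalso
                apply hne'
                have : a ∘ ι = b ∘ ι := funext fun i => hab (ι i) (fun h => hιu i (by rw [h, hu1]))
                rw [this]
              · by_cases hu2 : u = v₀
                · exfalso
                  apply hne'
                  have : a ∘ ι = b ∘ ι := funext fun i => hab (ι i) (fun h => hιv i (by rw [h, hu2]))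
                  rw [this]
                · obtain ⟨i, hi⟩ := hsurj u hu1 hu2
                  have hdep' : DependsEssOn (fun y : Fin k → Fin q => f' y (r w)) i := by
                    refine ⟨a ∘ ι, b ∘ ι, ?_, hne'⟩
                    intro j hj
                    exact hab (ι j) (fun h => hj (hι (by rw [h, ← hi])))
                  have hadj3 : G'.Adj i (r w) := hf' i (r w) hdep'
                  have : G.Adj (ι i) (ι (r w)) := hadj3
                  rwa [hi, hιr w hw1 hw2] at this
        set g : {y : Fin k → Fin q | f' y = y} × Fin q → (Fin (k+2) → Fin q) := fun yβ =>
          (fun w => if w = u₀ then yβ.2 else if w = v₀ then yβ.2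
            else (yβ.1 : Fin k → Fin q) (r w)) with hgdef
        have hgι : ∀ yβ (i : Fin k), g yβ (ι i) = (yβ.1 : Fin k → Fin q) i := by
          intro yβ i
          simp only [hgdef, if_neg (hιu i), if_neg (hιv i), hrι]
        have hkey : {z : Fin (k+2) → Fin q | f z = z} = Set.range g := by
          ext z
          simp only [Set.mem_setOf_eq, Set.mem_range]
          constructor
          · intro hz
            have hzv : z u₀ = z v₀ := by
              have := congrFun hz u₀
              simp only [hfdef, if_pos rfl] at this
              exact this.symm
            have hzfix : z ∘ ι ∈ {y : Fin k → Fin q | f' y = y} := by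
              funext j
              have h1 := congrFun hz (ι j)
              simp only [hfdef, if_neg (hιu j), if_neg (hιv j), hrι] at h1
              exact h1
            refine ⟨⟨⟨z ∘ ι, hzfix⟩, z u₀⟩, ?_⟩
            funext w
            simp only [hgdef]
            by_cases h1 : w = u₀
            · subst h1; rw [if_pos rfl]
            · by_cases h2 : w = v₀
              · subst h2; rw [if_neg h1, if_pos rfl, hzv]
              · rw [if_neg h1, if_neg h2]
                show z (ι (r w)) = z w
                rw [hιr w h1 h2]
          · rintro ⟨yβ, rfl⟩
            have hgu : g yβ u₀ = yβ.2 := by simp [hgdef]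
            have hgv : g yβ v₀ = yβ.2 := by simp [hgdef, Ne.symm hne]
            funext w
            simp only [hfdef]
            by_cases h1 : w = u₀
            · rw [if_pos h1, hgv, h1, hgu]
            · by_cases h2 : w = v₀
              · rw [if_neg h1, if_pos h2, hgu, h2, hgv]
              · rw [if_neg h1, if_neg h2]
                have hco : g yβ ∘ ι = (yβ.1 : Fin k → Fin q) := funext fun i => hgι yβ i
                rw [hco, congrFun yβ.1.2 (r w)]
                simp only [hgdef, if_neg h1, if_neg h2]
        have hginj : Function.Injective g := by
          intro y₁ y₂ h
          have hβ : y₁.2 = y₂.2 := by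
            have := congrFun h u₀
            simpa [hgdef] using this
          have hy : y₁.1 = y₂.1 := by
            apply Subtype.ext
            funext i
            have := congrFun h (ι i)
            rwa [hgι, hgι] at this
          exact Prod.ext hy hβ
        have hcard : Set.ncard {z : Fin (k+2) → Fin q | f z = z}
            = Set.ncard {y : Fin k → Fin q | f' y = y} * q := by
          rw [hkey, ncard_range g hginj, Nat.card_prod, Nat.card_coe_set_eq,
            Nat.card_eq_fintype_card, Fintype.card_fin]
        have hguess := le_guessing G hq hIG
        rw [hcard] at hguess
        rcases Nat.eq_zero_or_pos (Set.ncard {y : Fin k → Fin q | f' y = y}) with h0 | hpos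
        · rw [h0]
          have h1 := one_le_guessing hq G hadj
          simp only [Nat.cast_zero, Real.logb_zero]
          linarith
        · have hb : (1:ℝ) < (q:ℝ) := by exact_mod_cast hq
          have hmul : Real.logb q ((Set.ncard {y : Fin k → Fin q | f' y = y} * q : ℕ) : ℝ)
              = Real.logb q (Set.ncard {y : Fin k → Fin q | f' y = y}) + 1 := by
            push_cast
            rw [Real.logb_mul (by exact_mod_cast hpos.ne') (by positivity),
              Real.logb_self_eq_one hb]
          rw [hmul] at hguess
          linarith
      rw [guessing_eq G'] at *
      linarith
    linarith
  have hH : graphEntropy G = graphEntropy G' + 1 := by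
    apply le_antisymm
    · apply entropy_le G
      intro q hq
      rw [claim q hq]
      have := le_entropy G' hq
      linarith
    · have h1 : graphEntropy G' ≤ graphEntropy G - 1 := by
        apply entropy_le G'
        intro q hq
        have hc := claim q hq
        have := le_entropy G hq
        linarith
      linarith
  exact hmin k (by omega) G' (by rw [hH]; exact (Int.fract_add_one _).symm)


lemma cycle_pairs {N : ℕ} (hn : 5 ≤ N) (G : SimpleGraph (Fin N))
    (hcycle : ∀ i j : Fin N, i.val < 5 → j.val < 5 →
      (G.Adj i j ↔ (i.val + 1) % 5 = j.val ∨ (j.val + 1) % 5 = i.val))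
    (w : Fin N) :
    ∃ p₁ p₂ p₃ p₄ : Fin N, G.Adj p₁ p₂ ∧ G.Adj p₃ p₄ ∧
      p₁.val < 5 ∧ p₂.val < 5 ∧ p₃.val < 5 ∧ p₄.val < 5 ∧
      p₁.val ≠ p₂.val ∧ p₁.val ≠ p₃.val ∧ p₁.val ≠ p₄.val ∧
      p₂.val ≠ p₃.val ∧ p₂.val ≠ p₄.val ∧ p₃.val ≠ p₄.val ∧
      p₁.val ≠ w.val ∧ p₂.val ≠ w.val ∧ p₃.val ≠ w.val ∧ p₄.val ≠ w.val := by
  obtain ⟨t, htfacts⟩ : ∃ t : ℕ, t < 5 ∧ ((t = w.val ∧ w.val < 5) ∨ (t = 4 ∧ 5 ≤ w.val)) := by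
    by_cases hw : w.val < 5
    · exact ⟨w.val, hw, Or.inl ⟨rfl, hw⟩⟩
    · exact ⟨4, by omega, Or.inr ⟨rfl, by omega⟩⟩
  obtain ⟨ht5, htw⟩ := htfacts
  obtain ⟨p₁, hp₁⟩ : ∃ p : Fin N, p.val = (t+1) % 5 := ⟨⟨(t+1) % 5, by omega⟩, rfl⟩
  obtain ⟨p₂, hp₂⟩ : ∃ p : Fin N, p.val = (t+2) % 5 := ⟨⟨(t+2) % 5, by omega⟩, rfl⟩
  obtain ⟨p₃, hp₃⟩ : ∃ p : Fin N, p.val = (t+3) % 5 := ⟨⟨(t+3) % 5, by omega⟩, rfl⟩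
  obtain ⟨p₄, hp₄⟩ : ∃ p : Fin N, p.val = (t+4) % 5 := ⟨⟨(t+4) % 5, by omega⟩, rfl⟩
  refine ⟨p₁, p₂, p₃, p₄, ?_, ?_, by omega, by omega, by omega, by omega,
    by omega, by omega, by omega, by omega, by omega, by omega,
    by omega, by omega, by omega, by omega⟩
  · exact (hcycle p₁ p₂ (by omega) (by omega)).mpr (Or.inl (by omega))
  · exact (hcycle p₃ p₄ (by omega) (by omega)).mpr (Or.inl (by omega))

end EntAux

open EntAux in
/-- Let `G` be an entropy-minimal simple graph on `v₁,…,v_n` (here `0,…,n-1 : Fin n`) with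
`3 < H(G) < 4` whose induced subgraph on the first five vertices is the 5-cycle. Then the
subgraph induced on the remaining vertices has at most one edge. -/
theorem entropyMinimal_at_most_one_outer_edge {n : ℕ} (hn : 5 ≤ n)
    (G : SimpleGraph (Fin n)) (hmin : EntropyMinimal G)
    (h1 : 3 < graphEntropy G) (h2 : graphEntropy G < 4)
    (hcycle : ∀ i j : Fin n, i.val < 5 → j.val < 5 →
      (G.Adj i j ↔ (i.val + 1) % 5 = j.val ∨ (j.val + 1) % 5 = i.val)) :
    ∀ a b c d : Fin n, 5 ≤ a.val → 5 ≤ b.val → 5 ≤ c.val → 5 ≤ d.val →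
      G.Adj a b → G.Adj c d → (a = c ∧ b = d) ∨ (a = d ∧ b = c) := by
  obtain ⟨k, rfl⟩ : ∃ k, n = k + 2 := ⟨n - 2, by omega⟩
  intro a b c d ha hb hc hd hab hcd
  by_contra hcon
  push_neg at hcon
  have hne2 : ∀ {u v : ℕ}, u < 5 → 5 ≤ v → v ≠ u :=
    fun h1 h2 => Nat.ne_of_gt (lt_of_lt_of_le h1 h2)
  have shared : ∀ x y z : Fin (k+2), 5 ≤ x.val → 5 ≤ y.val → 5 ≤ z.val →
      y ≠ z → G.Adj x y → G.Adj x z → False := by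
    intro x y z hx hy hz hyz hxy hxz
    have hvxy : x.val ≠ y.val := fun h => hxy.ne (Fin.ext h)
    have hvxz : x.val ≠ z.val := fun h => hxz.ne (Fin.ext h)
    have hvyz : y.val ≠ z.val := fun h => hyz (Fin.ext h)
    by_cases htri : G.Adj y z
    · obtain ⟨p₁, p₂, p₃, p₄, hp12, hp34, hq1, hq2, hq3, hq4,
        hd12, hd13, hd14, hd23, hd24, hd34, -, -, -, -⟩ :=
        cycle_pairs (by omega) G hcycle x
      have h4 := four_le_entropy_triangle G x y z p₁ p₂ p₃ p₄
        hvxy hvxz (hne2 hq1 hx) (hne2 hq2 hx) (hne2 hq3 hx) (hne2 hq4 hx)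
        hvyz (hne2 hq1 hy) (hne2 hq2 hy) (hne2 hq3 hy) (hne2 hq4 hy)
        (hne2 hq1 hz) (hne2 hq2 hz) (hne2 hq3 hz) (hne2 hq4 hz)
        hd12 hd13 hd14 hd23 hd24 hd34
        hxy hxz htri hp12 hp34
      linarith
    · by_cases hpend : ∀ w, G.Adj y w → w = x
      · exact pendant_false (by omega) G hmin x y hxy hpend
      · push_neg at hpend
        obtain ⟨w, hyw, hwx⟩ := hpend
        have hwy : w ≠ y := hyw.ne'
        have hwz : w ≠ z := fun h => htri (h ▸ hyw)
        have hvwx : w.val ≠ x.val := fun h => hwx (Fin.ext h)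
        have hvwy : w.val ≠ y.val := fun h => hwy (Fin.ext h)
        have hvwz : w.val ≠ z.val := fun h => hwz (Fin.ext h)
        obtain ⟨p₁, p₂, p₃, p₄, hp12, hp34, hq1, hq2, hq3, hq4,
          hd12, hd13, hd14, hd23, hd24, hd34, hw1, hw2, hw3, hw4⟩ :=
          cycle_pairs (by omega) G hcycle w
        have h4 := four_le_entropy_matching G x z y w p₁ p₂ p₃ p₄
          hvxz hvxy hvwx.symm (hne2 hq1 hx) (hne2 hq2 hx) (hne2 hq3 hx) (hne2 hq4 hx)
          hvyz.symm hvwz.symm (hne2 hq1 hz) (hne2 hq2 hz)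
          (hne2 hq3 hz) (hne2 hq4 hz)
          hvwy.symm (hne2 hq1 hy) (hne2 hq2 hy) (hne2 hq3 hy) (hne2 hq4 hy)
          hw1.symm hw2.symm hw3.symm hw4.symm
          hd12 hd13 hd14 hd23 hd24 hd34
          hxz hyw hp12 hp34
        linarith
  by_cases hac : a = c
  · exact shared a b d ha hb hd (hcon.1 hac) hab (by rw [hac]; exact hcd)
  · by_cases had : a = d
    · exact shared a b c ha hb hc (hcon.2 had) hab (by rw [had]; exact hcd.symm)
    · by_cases hbc : b = c
      · have haned : a ≠ d := fun h => (hcon.2 h) hbc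
        exact shared b a d hb ha hd haned hab.symm (by rw [hbc]; exact hcd)
      · by_cases hbd : b = d
        · exact shared b a c hb ha hc hac hab.symm (by rw [hbd]; exact hcd.symm)
        · have hvab : a.val ≠ b.val := fun h => hab.ne (Fin.ext h)
          have hvcd : c.val ≠ d.val := fun h => hcd.ne (Fin.ext h)
          have hvac : a.val ≠ c.val := fun h => hac (Fin.ext h)
          have hvad : a.val ≠ d.val := fun h => had (Fin.ext h)
          have hvbc : b.val ≠ c.val := fun h => hbc (Fin.ext h)
          have hvbd : b.val ≠ d.val := fun h => hbd (Fin.ext h)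
          obtain ⟨p₁, p₂, p₃, p₄, hp12, hp34, hq1, hq2, hq3, hq4,
            hd12, hd13, hd14, hd23, hd24, hd34, -, -, -, -⟩ :=
            cycle_pairs (by omega) G hcycle a
          have h4 := four_le_entropy_matching G a b c d p₁ p₂ p₃ p₄
            hvab hvac hvad (hne2 hq1 ha) (hne2 hq2 ha) (hne2 hq3 ha) (hne2 hq4 ha)
            hvbc hvbd (hne2 hq1 hb) (hne2 hq2 hb) (hne2 hq3 hb) (hne2 hq4 hb)
            hvcd (hne2 hq1 hc) (hne2 hq2 hc) (hne2 hq3 hc) (hne2 hq4 hc)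
            (hne2 hq1 hd) (hne2 hq2 hd) (hne2 hq3 hd) (hne2 hq4 hd)
            hd12 hd13 hd14 hd23 hd24 hd34
            hab hcd hp12 hp34
          linarith

end
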